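/- Any two M-bases B, B' of a multi vector space V over a finite-dimensional vector space X satisfy ∑_{x ∈ B} C_V(x) = ∑_{x ∈ B'} C_V(x); consequently dim(V) = ∑_{x ∈ B} C_V(x) for any M-basis B, independent of the choice of M-basis. -/

import Mathlib

/-- Counting identity: a sum of naturals bounded by `N` equals the sum over levels of
the number of elements exceeding each level. -/
lemma mvs_sum_eq_sum_card {κ : Type*} [Fintype κ] (f : κ → ℕ) (N : ℕ) (h : ∀ j, f j ≤ N) :
    ∑ j, f j = ∑ k ∈ Finset.range N, (Finset.univ.filter fun j => k < f j).card := by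
  simp_rw [Finset.card_filter]
  rw [Finset.sum_comm]
  refine Finset.sum_congr rfl fun j _ => ?_
  rw [← Finset.card_filter]
  have : (Finset.range N).filter (fun k => k < f j) = Finset.range (f j) := by
    ext k
    simp only [Finset.mem_filter, Finset.mem_range]
    have := h j
    omega
  rw [this, Finset.card_range]

/-- Any M-basis majorises any basis in total count. -/
lemma mvs_Mbasis_sum_ge {K X ι κ : Type*} [Field K] [AddCommGroup X] [Module K X]
    [FiniteDimensional K X] [Fintype ι] [Fintype κ]
    (C : X → ℕ) (b : Module.Basis ι K X)
    (hM : ∀ (s : Finset ι) (hs : s.Nonempty) (a : ι → K), (∀ i ∈ s, a i ≠ 0) →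
      C (∑ i ∈ s, a i • b i) = s.inf' hs (fun i => C (b i)))
    (c : Module.Basis κ K X) :
    ∑ j, C (c j) ≤ ∑ i, C (b i) := by
  classical
  set N := Finset.univ.sup fun i => C (b i) with hN
  -- the support of the b-representation of c j is nonempty
  have hne : ∀ j : κ, (b.repr (c j)).support.Nonempty := by
    intro j
    rw [Finsupp.support_nonempty_iff]
    simp only [ne_eq, map_eq_zero_iff _ b.repr.injective]
    exact c.ne_zero j
  -- each basis vector in the support of c j has count at least that of c j
  have hkey : ∀ j : κ, ∀ i ∈ (b.repr (c j)).support, C (c j) ≤ C (b i) := by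
    intro j i hi
    have hsum : ∑ i ∈ (b.repr (c j)).support, (b.repr (c j)) i • b i = c j := by
      conv_rhs => rw [← b.linearCombination_repr (c j)]
      rw [Finsupp.linearCombination_apply, Finsupp.sum]
    have := hM (b.repr (c j)).support (hne j) (b.repr (c j))
      (fun i hi => Finsupp.mem_support_iff.mp hi)
    rw [hsum] at this
    rw [this]
    exact Finset.inf'_le _ hi
  have hCb : ∀ i : ι, C (b i) ≤ N := fun i => Finset.le_sup (f := fun i => C (b i)) (Finset.mem_univ i)
  have hCc : ∀ j : κ, C (c j) ≤ N := by
    intro j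
    obtain ⟨i, hi⟩ := hne j
    exact le_trans (hkey j i hi) (hCb i)
  rw [mvs_sum_eq_sum_card (fun j => C (c j)) N hCc,
      mvs_sum_eq_sum_card (fun i => C (b i)) N hCb]
  refine Finset.sum_le_sum fun k _ => ?_
  set Sb := Finset.univ.filter (fun i => k < C (b i)) with hSb
  set Sc := Finset.univ.filter (fun j => k < C (c j)) with hSc
  set W : Submodule K X := Submodule.span K (b '' ↑Sb) with hW
  have hmemW : ∀ j ∈ Sc, c j ∈ W := by
    intro j hj
    rw [hW, Module.Basis.mem_span_image]
    intro i hi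
    have hi' : i ∈ (b.repr (c j)).support := hi
    have : k < C (c j) := (Finset.mem_filter.mp hj).2
    simp only [hSb, Finset.coe_filter, Set.mem_setOf_eq, Finset.mem_univ, true_and]
    exact lt_of_lt_of_le this (hkey j i hi')
  have hfin : Module.finrank K W = Sb.card := by
    rw [hW, Set.image_eq_range]
    exact (finrank_span_eq_card (b.linearIndependent.comp _ Subtype.val_injective)).trans
      (Fintype.card_coe _)
  -- the family of c j for j ∈ Sc is linearly independent in W
  have hli : LinearIndependent K (fun j : {j // j ∈ Sc} => (⟨c j, hmemW j j.2⟩ : W)) := by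
    apply LinearIndependent.of_comp W.subtype
    exact c.linearIndependent.comp _ Subtype.val_injective
  have := hli.fintype_card_le_finrank
  rwa [hfin, Fintype.card_coe] at this

/-- The dimension of a multi vector space: the supremum of sums of counts over bases. -/
noncomputable def mdim (K : Type*) {X : Type*} [Field K] [AddCommGroup X] [Module K X]
    (C : X → ℕ) : ℕ :=
  sSup {s : ℕ | ∃ b : Module.Basis (Fin (Module.finrank K X)) K X, s = ∑ i, C (b i)}

/-- any two M-bases give the same count sum, which equals `mdim`. -/
theorem mvs_Mbasis_sum_unique
    {K X ι ι' : Type*} [Field K] [AddCommGroup X] [Module K X] [FiniteDimensional K X]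
    [Fintype ι] [Fintype ι']
    (C : X → ℕ)
    (hadd : ∀ x y : X, min (C x) (C y) ≤ C (x + y))
    (hsmul : ∀ (a : K) (x : X), C x ≤ C (a • x))
    (b : Module.Basis ι K X)
    (hM : ∀ (s : Finset ι) (hs : s.Nonempty) (a : ι → K), (∀ i ∈ s, a i ≠ 0) →
      C (∑ i ∈ s, a i • b i) = s.inf' hs (fun i => C (b i)))
    (b' : Module.Basis ι' K X)
    (hM' : ∀ (s : Finset ι') (hs : s.Nonempty) (a : ι' → K), (∀ i ∈ s, a i ≠ 0) →
      C (∑ i ∈ s, a i • b' i) = s.inf' hs (fun i => C (b' i))) :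
    (∑ i, C (b i) = ∑ j, C (b' j)) ∧ mdim K C = ∑ i, C (b i) := by
  have heq : ∑ i, C (b i) = ∑ j, C (b' j) :=
    le_antisymm (mvs_Mbasis_sum_ge C b' hM' b) (mvs_Mbasis_sum_ge C b hM b')
  refine ⟨heq, ?_⟩
  have hub : ∀ s ∈ {s : ℕ | ∃ c : Module.Basis (Fin (Module.finrank K X)) K X, s = ∑ i, C (c i)},
      s ≤ ∑ i, C (b i) := by
    rintro s ⟨c, rfl⟩
    exact mvs_Mbasis_sum_ge C b hM c
  have hmem : (∑ i, C (b i)) ∈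
      {s : ℕ | ∃ c : Module.Basis (Fin (Module.finrank K X)) K X, s = ∑ i, C (c i)} := by
    have e : ι ≃ Fin (Module.finrank K X) :=
      Fintype.equivFinOfCardEq (Module.finrank_eq_card_basis b).symm
    refine ⟨b.reindex e, ?_⟩
    rw [Fintype.sum_equiv e (fun i => C (b i)) (fun j => C ((b.reindex e) j))]
    intro i
    simp
  exact le_antisymm (csSup_le ⟨_, hmem⟩ hub) (le_csSup ⟨_, hub⟩ hmem)
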